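/- Let G be a graph with a dominating induced matching M containing edge xy, with distance levels N_i, such that no edge of M lies within N_3 or between N_3 and N_4. Then the subgraph of G induced by N_3 is bipartite (equivalently, triangle-free together with no odd cycles: it contains no odd cycle). -/

import Mathlib

/-- `M` is a dominating induced matching of `G`: `M ⊆ E(G)` and every edge of `G`
intersects (shares a vertex with) exactly one edge of `M`. -/
def IsDIM {V : Type*} (G : SimpleGraph V) (M : Set (Sym2 V)) : Prop :=
  M ⊆ G.edgeSet ∧ ∀ e ∈ G.edgeSet, ∃! f, f ∈ M ∧ ∃ v, v ∈ e ∧ v ∈ f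

private lemma alt_walk {V : Type*} {G : SimpleGraph V} (S : Set V) :
    ∀ {u v : V} (p : G.Walk u v),
      (∀ a b : V, s(a, b) ∈ p.edges → ((a ∈ S) ↔ ¬ b ∈ S)) →
      ((u ∈ S ↔ v ∈ S) ↔ Even p.length) := by
  intro u v p
  induction p with
  | nil => simp
  | cons h p ih =>
    intro hx
    have h1 := hx _ _ (List.mem_cons_self)
    have h2 := ih (fun a b hab => hx a b (by rw [SimpleGraph.Walk.edges_cons]; exact List.mem_cons_of_mem _ hab))
    simp only [SimpleGraph.Walk.length_cons, Nat.even_add_one]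
    tauto

theorem stmt_17 {V : Type*} [Fintype V] (G : SimpleGraph V) (M : Set (Sym2 V))
    (hM : IsDIM G M) (x y : V) (hxy : G.Adj x y) (hxyM : s(x, y) ∈ M)
    (hno : ∀ a b : V, s(a, b) ∈ M →
      ¬ (min (G.dist a x) (G.dist a y) = 3 ∧ min (G.dist b x) (G.dist b y) = 3) ∧
      ¬ (min (G.dist a x) (G.dist a y) = 3 ∧ min (G.dist b x) (G.dist b y) = 4)) :
    ∀ (v : V) (c : G.Walk v v), c.IsCycle →
      (∀ w ∈ c.support, min (G.dist w x) (G.dist w y) = 3) →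
      ¬ Odd c.length := by
  intro v c hc hlvl
  rw [Nat.not_even_iff_odd.symm, not_not]
  set S : Set V := {w | ∃ f ∈ M, w ∈ f} with hS
  have key : ∀ a b : V, s(a, b) ∈ c.edges → ((a ∈ S) ↔ ¬ b ∈ S) := by
    intro a b hab
    have hedge : s(a, b) ∈ G.edgeSet := c.edges_subset_edgeSet hab
    have hne : a ≠ b := (G.mem_edgeSet.mp hedge).ne
    -- the edge s(a,b) is not in M
    have hnotM : s(a, b) ∉ M := by
      intro hmem
      have ha := hlvl a (SimpleGraph.Walk.fst_mem_support_of_mem_edges c hab)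
      have hb := hlvl b (SimpleGraph.Walk.snd_mem_support_of_mem_edges c hab)
      exact (hno a b hmem).1 ⟨ha, hb⟩
    obtain ⟨f, ⟨hfM, w, hwe, hwf⟩, huniq⟩ := hM.2 _ hedge
    have hone : ∀ f₁ ∈ M, ∀ f₂ ∈ M, a ∈ f₁ → b ∈ f₂ → False := by
      intro f₁ h₁ f₂ h₂ ha hb
      have e₁ : f₁ = f := huniq f₁ ⟨h₁, a, by simp, ha⟩
      have e₂ : f₂ = f := huniq f₂ ⟨h₂, b, by simp, hb⟩
      have : f = s(a, b) := ((Sym2.mem_and_mem_iff hne).mp ⟨e₁ ▸ ha, e₂ ▸ hb⟩)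
      exact hnotM (this ▸ hfM)
    constructor
    · rintro ⟨f₁, h₁, ha⟩ ⟨f₂, h₂, hb⟩
      exact hone f₁ h₁ f₂ h₂ ha hb
    · intro hbn
      rcases Sym2.mem_iff.mp hwe with rfl | rfl
      · exact ⟨f, hfM, hwf⟩
      · exact absurd ⟨f, hfM, hwf⟩ hbn
  exact (alt_walk S c key).mp Iff.rfl
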